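/- Let H be a symmetric positive-definite d×d matrix, θ, θ̂ : ℝ≥0 → ℝᵈ differentiable, S : ℝᵈ → ℝᵈ a C¹ vector field whose Jacobian satisfies H·DS(z) + DS(z)ᵀH ≤ 0 for all z, and suppose θ' = S(θ), θ̂' = S(θ̂) + H⁻¹ (κ(t)²+1) A(t)ᵀ (A(t)(θ−θ̂) + ε(t)), where A : ℝ≥0 → ℝ^{n×d} and ε, κ·ε : ℝ≥0 → ℝⁿ are continuous with ε ∈ L² and t ↦ κ(t)ε(t) ∈ L². Then the function V(t) = (θ(t)−θ̂(t))ᵀ H (θ(t)−θ̂(t)) + (1/2)∫_t^∞ (κ(τ)²+1)‖ε(τ)‖² dτ is nonincreasing, and consequently θ(t)−θ̂(t) is bounded on ℝ≥0. -/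

import Mathlib

open MeasureTheory Set Matrix

/-- Squared Euclidean norm. -/
def esq {n : ℕ} (v : Fin n → ℝ) : ℝ := ∑ i, (v i) ^ 2

/-- Jacobian of S at z. -/
noncomputable def jac {d : ℕ} (S : (Fin d → ℝ) → (Fin d → ℝ)) (z : Fin d → ℝ) :
    Matrix (Fin d) (Fin d) ℝ :=
  Matrix.of fun i j => fderiv ℝ S z (Pi.single j 1) i



lemma esq_nonneg {n : ℕ} (v : Fin n → ℝ) : 0 ≤ esq v :=
  Finset.sum_nonneg fun _ _ => sq_nonneg _

lemma continuous_esq {n : ℕ} : Continuous (esq (n := n)) := by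
  unfold esq; exact continuous_finset_sum _ fun i _ => ((continuous_apply i).pow 2)

lemma esq_eq_norm_sq {d : ℕ} (x : EuclideanSpace ℝ (Fin d)) :
    esq (WithLp.equiv 2 (Fin d → ℝ) x) = ‖x‖ ^ 2 := by
  rw [EuclideanSpace.norm_eq, Real.sq_sqrt (Finset.sum_nonneg fun i _ => sq_nonneg _)]
  simp [esq, Real.norm_eq_abs, sq_abs]

lemma posdef_lower {d : ℕ} (H : Matrix (Fin d) (Fin d) ℝ) (hH : H.PosDef) :
    ∃ c : ℝ, 0 < c ∧ ∀ x : Fin d → ℝ, c * esq x ≤ x ⬝ᵥ H.mulVec x := by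
  rcases Nat.eq_zero_or_pos d with hd | hd
  · subst hd
    exact ⟨1, one_pos, fun x => by simp [esq, dotProduct]⟩
  · haveI : Nonempty (Fin d) := ⟨⟨0, hd⟩⟩
    haveI : Nontrivial (EuclideanSpace ℝ (Fin d)) := by
      refine ⟨⟨0, EuclideanSpace.single ⟨0, hd⟩ 1, fun h => ?_⟩⟩
      have := congrArg norm h
      simp [EuclideanSpace.norm_single] at this
    set f : EuclideanSpace ℝ (Fin d) → ℝ :=
      fun x => (WithLp.equiv 2 (Fin d → ℝ) x) ⬝ᵥ H.mulVec (WithLp.equiv 2 (Fin d → ℝ) x) with hf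
    have hfc : Continuous f := by
      have h1 : Continuous fun x : Fin d → ℝ => x ⬝ᵥ H.mulVec x := by
        unfold dotProduct Matrix.mulVec dotProduct
        exact continuous_finset_sum _ fun i _ => (continuous_apply i).mul
          (continuous_finset_sum _ fun j _ => (continuous_const.mul (continuous_apply j)))
      exact h1.comp (EuclideanSpace.equiv (Fin d) ℝ).continuous
    have hsph : (Metric.sphere (0 : EuclideanSpace ℝ (Fin d)) 1).Nonempty :=
      NormedSpace.sphere_nonempty.mpr zero_le_one
    obtain ⟨x₀, hx₀s, hx₀min⟩ := (isCompact_sphere (0 : EuclideanSpace ℝ (Fin d)) 1).exists_isMinOn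
      hsph hfc.continuousOn
    have hx₀norm : ‖x₀‖ = 1 := by simpa using mem_sphere_zero_iff_norm.mp hx₀s
    have hc : 0 < f x₀ := by
      refine hH.dotProduct_mulVec_pos (x := WithLp.equiv 2 (Fin d → ℝ) x₀) (fun h => ?_) |>.trans_eq (by simp [hf])
      have : x₀ = 0 := (WithLp.equiv 2 (Fin d → ℝ)).injective (by simpa using h)
      simp [this] at hx₀norm
    refine ⟨f x₀, hc, fun x => ?_⟩
    set X : EuclideanSpace ℝ (Fin d) := (WithLp.equiv 2 (Fin d → ℝ)).symm x with hX
    have hXx : WithLp.equiv 2 (Fin d → ℝ) X = x := by simp [hX]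
    by_cases hx : X = 0
    · have hx0 : x = 0 := by rw [← hXx, hx]; simp
      simp [hx0, esq, dotProduct]
    · have hxnorm : (0:ℝ) < ‖X‖ := norm_pos_iff.mpr hx
      set y : EuclideanSpace ℝ (Fin d) := ‖X‖⁻¹ • X with hy
      have hys : y ∈ Metric.sphere (0 : EuclideanSpace ℝ (Fin d)) 1 := by
        rw [mem_sphere_zero_iff_norm, hy, norm_smul, norm_inv, norm_norm,
          inv_mul_cancel₀ hxnorm.ne']
      have hmin := hx₀min hys
      have hscale : f y = ‖X‖⁻¹ ^ 2 * f X := by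
        have hyc : WithLp.equiv 2 (Fin d → ℝ) y = ‖X‖⁻¹ • x := by
          rw [hy, ← hXx]; rfl
        simp only [hf, hyc, hXx, Matrix.mulVec_smul, dotProduct_smul, smul_dotProduct,
          smul_eq_mul]
        ring
      have h1 : f x₀ ≤ ‖X‖⁻¹ ^ 2 * f X := hscale ▸ hmin
      have h2 := mul_le_mul_of_nonneg_left h1 (sq_nonneg ‖X‖)
      have hesq : esq x = ‖X‖ ^ 2 := by rw [← hXx]; exact esq_eq_norm_sq X
      have hfX : f X = x ⬝ᵥ H.mulVec x := by rw [hf]; simp [hXx]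
      calc f x₀ * esq x = ‖X‖ ^ 2 * f x₀ := by rw [hesq]; ring
        _ ≤ ‖X‖ ^ 2 * (‖X‖⁻¹ ^ 2 * f X) := h2
        _ = f X := by field_simp
        _ = x ⬝ᵥ H.mulVec x := hfX


lemma jac_mulVec {d : ℕ} (S : (Fin d → ℝ) → (Fin d → ℝ)) (z e : Fin d → ℝ) :
    (jac S z).mulVec e = fderiv ℝ S z e := by
  funext i
  have he : e = ∑ j, e j • (Pi.single j 1 : Fin d → ℝ) := by
    funext k
    simp [Finset.sum_apply, Pi.single_apply]
  conv_rhs => rw [he]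
  rw [map_sum]
  simp [jac, Matrix.mulVec, dotProduct, Finset.sum_apply, mul_comm]

lemma dot_symm {d : ℕ} (H : Matrix (Fin d) (Fin d) ℝ) (hHsymm : H.IsSymm)
    (x y : Fin d → ℝ) : x ⬝ᵥ H.mulVec y = y ⬝ᵥ H.mulVec x := by
  rw [Matrix.dotProduct_mulVec, ← Matrix.mulVec_transpose, hHsymm.eq, dotProduct_comm]

lemma key_mono {d : ℕ} (H : Matrix (Fin d) (Fin d) ℝ) (hHsymm : H.IsSymm)
    (S : (Fin d → ℝ) → (Fin d → ℝ)) (hS : ContDiff ℝ 1 S)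
    (hneg : ∀ z : Fin d → ℝ, (-(H * jac S z + (jac S z)ᵀ * H)).PosSemidef)
    (a b : Fin d → ℝ) : (a - b) ⬝ᵥ H.mulVec (S a - S b) ≤ 0 := by
  set e := a - b with he
  set w := H.vecMul e with hw
  have hdotw : ∀ x, e ⬝ᵥ H.mulVec x = (e ᵥ* H) ⬝ᵥ x := fun x => Matrix.dotProduct_mulVec _ _ _
  have hSdiff : Differentiable ℝ S := hS.differentiable one_ne_zero
  -- path derivative
  have hpath : ∀ s : ℝ, HasDerivAt (fun s : ℝ => b + s • e) e s := by
    intro s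
    simpa using ((hasDerivAt_id s).smul_const e).const_add b
  have hcomp : ∀ s : ℝ, HasDerivAt (fun s => S (b + s • e)) (fderiv ℝ S (b + s • e) e) s := by
    intro s
    exact ((hSdiff (b + s • e)).hasFDerivAt).comp_hasDerivAt s (hpath s)
  set φ : ℝ → ℝ := fun s => e ⬝ᵥ H.mulVec (S (b + s • e)) with hφ
  have hφd : ∀ s : ℝ, HasDerivAt φ (e ⬝ᵥ H.mulVec ((jac S (b + s • e)).mulVec e)) s := by
    intro s
    have h1 : HasDerivAt (fun s => (e ᵥ* H) ⬝ᵥ S (b + s • e))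
        ((e ᵥ* H) ⬝ᵥ fderiv ℝ S (b + s • e) e) s := by
      have := hcomp s
      have hcoord := hasDerivAt_pi.mp this
      unfold dotProduct
      exact HasDerivAt.fun_sum fun i _ => (hcoord i).const_mul _
    have : φ = fun s => (e ᵥ* H) ⬝ᵥ S (b + s • e) := by
      funext s; exact hdotw _
    rw [this, jac_mulVec, hdotw]
    exact h1
  have hφ' : ∀ s : ℝ, e ⬝ᵥ H.mulVec ((jac S (b + s • e)).mulVec e) ≤ 0 := by
    intro s
    set z := b + s • e
    set J := jac S z with hJ
    have hps := (hneg z).dotProduct_mulVec_nonneg e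
    have hstar : star e = e := by funext i; simp
    rw [hstar] at hps
    have hexp : e ⬝ᵥ (-(H * J + Jᵀ * H)) *ᵥ e
        = -(e ⬝ᵥ H.mulVec (J.mulVec e) + e ⬝ᵥ Jᵀ.mulVec (H.mulVec e)) := by
      rw [Matrix.neg_mulVec, dotProduct_neg, Matrix.add_mulVec, dotProduct_add,
        ← Matrix.mulVec_mulVec, ← Matrix.mulVec_mulVec]
    have heq : e ⬝ᵥ Jᵀ.mulVec (H.mulVec e) = e ⬝ᵥ H.mulVec (J.mulVec e) :=
      calc e ⬝ᵥ Jᵀ *ᵥ (H *ᵥ e) = e ⬝ᵥ ((H *ᵥ e) ᵥ* J) := by rw [Matrix.mulVec_transpose]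
        _ = (H *ᵥ e) ⬝ᵥ (J *ᵥ e) := by rw [dotProduct_comm, ← Matrix.dotProduct_mulVec]
        _ = (J *ᵥ e) ⬝ᵥ (H *ᵥ e) := dotProduct_comm _ _
        _ = e ⬝ᵥ H *ᵥ (J *ᵥ e) := (dot_symm H hHsymm e (J *ᵥ e)).symm
    rw [hexp, heq] at hps
    linarith [hps]
  have hanti : Antitone φ := by
    refine antitone_of_deriv_nonpos (fun s => (hφd s).differentiableAt) (fun s => ?_)
    rw [(hφd s).deriv]; exact hφ' s
  have h01 : φ 1 ≤ φ 0 := hanti zero_le_one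
  have hφ1 : φ 1 = e ⬝ᵥ H.mulVec (S a) := by
    rw [hφ]; simp [he]
  have hφ0 : φ 0 = e ⬝ᵥ H.mulVec (S b) := by
    rw [hφ]; simp
  rw [hφ1, hφ0] at h01
  have : (a - b) ⬝ᵥ H.mulVec (S a - S b)
      = e ⬝ᵥ H.mulVec (S a) - e ⬝ᵥ H.mulVec (S b) := by
    rw [he, Matrix.mulVec_sub, dotProduct_sub]
  linarith [this, h01]

lemma hasDerivAt_quadform {d : ℕ} (H : Matrix (Fin d) (Fin d) ℝ)
    {f : ℝ → Fin d → ℝ} {f' : Fin d → ℝ} {t : ℝ} (hf : HasDerivAt f f' t) :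
    HasDerivAt (fun t => f t ⬝ᵥ H.mulVec (f t))
      (f' ⬝ᵥ H.mulVec (f t) + f t ⬝ᵥ H.mulVec f') t := by
  have h1 : ∀ i, HasDerivAt (fun t => f t i) (f' i) t := fun i => hasDerivAt_pi.mp hf i
  have h2 : HasDerivAt (fun t => ∑ i, ∑ j, f t i * (H i j * f t j))
      (∑ i, ∑ j, (f' i * (H i j * f t j) + f t i * (H i j * f' j))) t :=
    HasDerivAt.fun_sum fun i _ => HasDerivAt.fun_sum fun j _ =>
      ((h1 i).mul ((h1 j).const_mul (H i j)))
  have heqf : (fun t => f t ⬝ᵥ H.mulVec (f t)) = fun t => ∑ i, ∑ j, f t i * (H i j * f t j) := by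
    funext t
    simp [dotProduct, Matrix.mulVec, Finset.mul_sum]
  have heqd : f' ⬝ᵥ H.mulVec (f t) + f t ⬝ᵥ H.mulVec f'
      = ∑ i, ∑ j, (f' i * (H i j * f t j) + f t i * (H i j * f' j)) := by
    simp [dotProduct, Matrix.mulVec, Finset.mul_sum, Finset.sum_add_distrib]
  rw [heqf, heqd]
  exact h2

-- integral splitting
lemma integral_Ici_split {g : ℝ → ℝ} (hg : IntegrableOn g (Ici (0:ℝ))) {t : ℝ} (ht : 0 ≤ t) :
    ∫ τ in Ici t, g τ = (∫ τ in Ici (0:ℝ), g τ) - ∫ τ in (0:ℝ)..t, g τ := by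
  have hsplit : Ico (0:ℝ) t ∪ Ici t = Ici 0 := Ico_union_Ici_eq_Ici ht
  have hdisj : Disjoint (Ico (0:ℝ) t) (Ici t) := by
    refine Set.disjoint_left.mpr fun x hx hx' => ?_
    exact absurd hx' (not_le.mpr hx.2)
  have h1 : (∫ τ in Ici (0:ℝ), g τ) = (∫ τ in Ico (0:ℝ) t, g τ) + ∫ τ in Ici t, g τ := by
    rw [← hsplit]
    exact setIntegral_union hdisj measurableSet_Ici
      (hg.mono_set (hsplit ▸ subset_union_left)) (hg.mono_set (hsplit ▸ subset_union_right))
  have h2 : (∫ τ in Ico (0:ℝ) t, g τ) = ∫ τ in (0:ℝ)..t, g τ := by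
    rw [intervalIntegral.integral_of_le ht, MeasureTheory.integral_Ico_eq_integral_Ioo, ← MeasureTheory.integral_Ioc_eq_integral_Ioo]
  linarith [h1, h2]


/-- the Lyapunov function of the virtual adaptation algorithm is
nonincreasing and the parameter error θ − θ̂ is bounded. -/
theorem virtual_adaptation_bounded {n d : ℕ}
    (H : Matrix (Fin d) (Fin d) ℝ) (hHsymm : H.IsSymm) (hHpos : H.PosDef)
    (S : (Fin d → ℝ) → (Fin d → ℝ)) (hS : ContDiff ℝ 1 S)
    (hneg : ∀ z : Fin d → ℝ, (-(H * jac S z + (jac S z)ᵀ * H)).PosSemidef)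
    (A : ℝ → Matrix (Fin n) (Fin d) ℝ) (hA : Continuous A)
    (κ : ℝ → ℝ) (hκ : Continuous κ)
    (ε : ℝ → Fin n → ℝ) (hε : Continuous ε)
    (hεL2 : IntegrableOn (fun t => esq (ε t)) (Ici (0 : ℝ)))
    (hκεL2 : IntegrableOn (fun t => esq (κ t • ε t)) (Ici (0 : ℝ)))
    (θ θhat : ℝ → Fin d → ℝ)
    (hθ : ∀ t, HasDerivAt θ (S (θ t)) t)
    (hθhat : ∀ t, HasDerivAt θhat
      (S (θhat t) +
        H⁻¹.mulVec ((κ t ^ 2 + 1) •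
          (A t)ᵀ.mulVec ((A t).mulVec (θ t - θhat t) + ε t))) t) :
    (AntitoneOn
      (fun t => (θ t - θhat t) ⬝ᵥ H.mulVec (θ t - θhat t) +
        (1 / 2) * ∫ τ in Ici t, (κ τ ^ 2 + 1) * esq (ε τ)) (Ici (0 : ℝ))) ∧
    ∃ C : ℝ, ∀ t, 0 ≤ t → Real.sqrt (esq (θ t - θhat t)) ≤ C := by
  set e : ℝ → Fin d → ℝ := fun t => θ t - θhat t with he
  set e' : ℝ → Fin d → ℝ := fun t => S (θ t) -
      (S (θhat t) + H⁻¹.mulVec ((κ t ^ 2 + 1) •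
        (A t)ᵀ.mulVec ((A t).mulVec (e t) + ε t))) with he'
  have hde : ∀ t, HasDerivAt e (e' t) t := fun t => (hθ t).sub (hθhat t)
  set g : ℝ → ℝ := fun t => (κ t ^ 2 + 1) * esq (ε t) with hg
  have hgc : Continuous g := ((hκ.pow 2).add continuous_const).mul (continuous_esq.comp hε)
  have hgnn : ∀ t, 0 ≤ g t := fun t =>
    mul_nonneg (by positivity) (esq_nonneg _)
  have hgint : IntegrableOn g (Ici (0:ℝ)) := by
    refine MeasureTheory.IntegrableOn.congr_fun (hεL2.add hκεL2) (fun t _ => ?_) measurableSet_Ici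
    show esq (ε t) + esq (κ t • ε t) = g t
    simp only [hg, esq, Pi.smul_apply, smul_eq_mul]
    rw [Finset.mul_sum, ← Finset.sum_add_distrib]
    exact Finset.sum_congr rfl fun i _ => by ring
  set C₀ : ℝ := ∫ τ in Ici (0:ℝ), g τ with hC₀
  set V : ℝ → ℝ := fun t => e t ⬝ᵥ H.mulVec (e t) + (1/2) * ∫ τ in Ici t, g τ with hV
  set W : ℝ → ℝ := fun t => e t ⬝ᵥ H.mulVec (e t) + (1/2) * C₀
      - (1/2) * ∫ τ in (0:ℝ)..t, g τ with hW
  have hVW : ∀ t, 0 ≤ t → V t = W t := by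
    intro t ht
    rw [hV, hW]
    simp only []
    rw [integral_Ici_split hgint ht]
    ring
  -- derivative of W
  have hdet : IsUnit H.det := hHpos.det_pos.ne'.isUnit
  have hWd : ∀ t, HasDerivAt W
      ((e' t ⬝ᵥ H.mulVec (e t) + e t ⬝ᵥ H.mulVec (e' t)) - (1/2) * g t) t := by
    intro t
    have h1 := hasDerivAt_quadform H (hde t)
    have h2 : HasDerivAt (fun t => ∫ τ in (0:ℝ)..t, g τ) (g t) t :=
      (hgc.integral_hasStrictDerivAt 0 t).hasDerivAt
    exact (h1.add_const ((1/2) * C₀)).sub (h2.const_mul (1/2))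
  have hWd_le : ∀ t, (e' t ⬝ᵥ H.mulVec (e t) + e t ⬝ᵥ H.mulVec (e' t)) - (1/2) * g t ≤ 0 := by
    intro t
    set c : ℝ := κ t ^ 2 + 1 with hc
    have hcpos : 0 < c := by positivity
    set u : Fin n → ℝ := (A t).mulVec (e t) with hu
    have hHinv : H *ᵥ (H⁻¹ *ᵥ (c • ((A t)ᵀ *ᵥ (u + ε t)))) = c • ((A t)ᵀ *ᵥ (u + ε t)) := by
      rw [Matrix.mulVec_mulVec, Matrix.mul_nonsing_inv H hdet, Matrix.one_mulVec]
    have hsplit : e t ⬝ᵥ H.mulVec (e' t)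
        = e t ⬝ᵥ H.mulVec (S (θ t) - S (θhat t)) - c * (u ⬝ᵥ (u + ε t)) := by
      have he'2 : e' t = (S (θ t) - S (θhat t))
          - H⁻¹ *ᵥ (c • ((A t)ᵀ *ᵥ (u + ε t))) := by
        rw [he']
        simp only [hu, hc]
        abel
      rw [he'2, Matrix.mulVec_sub, dotProduct_sub, hHinv, dotProduct_smul, smul_eq_mul]
      congr 1
      rw [Matrix.mulVec_transpose, dotProduct_comm, ← Matrix.dotProduct_mulVec,
        dotProduct_comm]
    have hkey : e t ⬝ᵥ H.mulVec (S (θ t) - S (θhat t)) ≤ 0 :=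
      key_mono H hHsymm S hS hneg (θ t) (θhat t)
    have hsym : e' t ⬝ᵥ H.mulVec (e t) = e t ⬝ᵥ H.mulVec (e' t) :=
      dot_symm H hHsymm _ _
    have hdotadd : u ⬝ᵥ (u + ε t) = u ⬝ᵥ u + u ⬝ᵥ ε t := dotProduct_add _ _ _
    have hquad : 0 ≤ 2 * (u ⬝ᵥ u) + 2 * (u ⬝ᵥ ε t) + (1/2) * esq (ε t) := by
      have heqs : 2 * (u ⬝ᵥ u) + 2 * (u ⬝ᵥ ε t) + (1/2) * esq (ε t)
          = ∑ i, (2 * u i * u i + 2 * (u i * ε t i) + (1/2) * (ε t i)^2) := by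
        simp only [dotProduct, esq, Finset.mul_sum, ← Finset.sum_add_distrib]
        exact Finset.sum_congr rfl fun i _ => by ring
      rw [heqs]
      exact Finset.sum_nonneg fun i _ => by nlinarith [sq_nonneg (u i + ε t i / 2)]
    have hmul := mul_nonneg hcpos.le hquad
    have hgt : g t = c * esq (ε t) := by rw [hg, hc]
    rw [hsym, hsplit, hdotadd, hgt]
    nlinarith [hkey, hmul]
  have hWanti : AntitoneOn W (Ici (0:ℝ)) := by
    refine antitoneOn_of_deriv_nonpos (convex_Ici 0) ?_ ?_ ?_
    · exact (fun t _ => ((hWd t).differentiableAt.continuousAt.continuousWithinAt))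
    · exact fun t _ => (hWd t).differentiableAt.differentiableWithinAt
    · intro t _
      rw [(hWd t).deriv]
      exact hWd_le t
  have hVanti : AntitoneOn V (Ici (0:ℝ)) := by
    intro a ha b hb hab
    rw [hVW a ha, hVW b hb]
    exact hWanti ha hb hab
  refine ⟨hVanti, ?_⟩
  obtain ⟨c₁, hc₁pos, hc₁⟩ := posdef_lower H hHpos
  refine ⟨Real.sqrt (V 0 / c₁), fun t ht => ?_⟩
  have hVt : V t ≤ V 0 := hVanti (Set.mem_Ici.mpr le_rfl) ht ht
  have hWnn : 0 ≤ ∫ τ in Ici t, g τ :=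
    setIntegral_nonneg measurableSet_Ici fun τ _ => hgnn τ
  have hquadle : e t ⬝ᵥ H.mulVec (e t) ≤ V 0 := by
    have h3 : e t ⬝ᵥ H.mulVec (e t) + (1/2) * ∫ τ in Ici t, g τ ≤ V 0 := hVt
    have h4 : (0:ℝ) ≤ (1/2) * ∫ τ in Ici t, g τ := mul_nonneg (by norm_num) hWnn
    exact (le_add_of_nonneg_right h4).trans h3
  have h1 : c₁ * esq (e t) ≤ V 0 := (hc₁ (e t)).trans hquadle
  have h2 : esq (e t) ≤ V 0 / c₁ := (le_div_iff₀ hc₁pos).mpr (by linarith [h1])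
  calc Real.sqrt (esq (θ t - θhat t)) = Real.sqrt (esq (e t)) := rfl
    _ ≤ Real.sqrt (V 0 / c₁) := Real.sqrt_le_sqrt h2
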